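/- On the Hochschild bicomplex C^{p,q} = C^p(A_n, Ω̂^q), the exterior differential d f := (−1)^p dz^i ∧ ∂f/∂z^i anticommutes with the Hochschild differential ∂: one has d∂ + ∂d = 0. -/

import Mathlib

open MvPolynomial

/-! The Hochschild bicomplex `C^{p,q} = C^p(A_n, Ω̂^q)`: cochains on the
polynomial Weyl algebra `A_n = ℂ[y^1,…,y^{2n}]` with values in exterior forms
in `dz^1,…,dz^{2n}` whose coefficients are formal power series in the `y` and
`z` variables, with the star product
`a ∗ b = a · exp(i ∂_y^← π (∂_y^→ + ∂_z^→)) · b`, the right action being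
twisted by `ã(y,z;dz) = a(-y)` (for `z`-independent `0`-forms `a ∈ A_n`). -/

variable (N : ℕ)

/-- Variables: `y`'s are `Sum.inl`, `z`'s are `Sum.inr`. -/
abbrev YZ (N : ℕ) := Fin N ⊕ Fin N

/-- Coefficients of forms: power series in `y` and `z`. -/
abbrev OSeries (N : ℕ) := MvPowerSeries (YZ N) ℂ

/-- Coefficient array of a `q`-form in the `dz`'s. -/
abbrev OForm (N q : ℕ) := (Fin q → Fin N) → OSeries N

/-- A Hochschild `p`-cochain with values in `q`-forms. -/
abbrev BiCochain (N p q : ℕ) := (Fin p → MvPolynomial (Fin N) ℂ) → OForm N q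

/-- Partial derivative on power series in the doubled `(y,z)` variables. -/
noncomputable def pdW (v : YZ N ⊕ YZ N)
    (g : MvPowerSeries (YZ N ⊕ YZ N) ℂ) : MvPowerSeries (YZ N ⊕ YZ N) ℂ :=
  fun e => ((e v : ℂ) + 1) * g (e + Finsupp.single v 1)

/-- The contraction operator `Σ π^{jk} ∂_{y^j} ⊗ (∂_{y^k} + ∂_{z^k})` on power
series in doubled `(y,z)` variables: the left tensor factor lives in the
`Sum.inl` copy, the right one in the `Sum.inr` copy. -/
noncomputable def stepW (π : Matrix (Fin N) (Fin N) ℂ)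
    (g : MvPowerSeries (YZ N ⊕ YZ N) ℂ) : MvPowerSeries (YZ N ⊕ YZ N) ℂ :=
  fun e => ∑ j : Fin N, ∑ k : Fin N, π j k *
    (pdW N (Sum.inl (Sum.inl j)) (pdW N (Sum.inr (Sum.inl k)) g) e +
     pdW N (Sum.inl (Sum.inl j)) (pdW N (Sum.inr (Sum.inr k)) g) e)

open scoped Classical in
/-- Place a power series in `(y,z)` in the left copy of the doubled variables. -/
noncomputable def embWL (f : OSeries N) : MvPowerSeries (YZ N ⊕ YZ N) ℂ :=
  fun e => if ∀ v, e (Sum.inr v) = 0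
    then f (Finsupp.comapDomain Sum.inl e Sum.inl_injective.injOn) else 0

open scoped Classical in
/-- Place a power series in `(y,z)` in the right copy of the doubled variables. -/
noncomputable def embWR (f : OSeries N) : MvPowerSeries (YZ N ⊕ YZ N) ℂ :=
  fun e => if ∀ v, e (Sum.inl v) = 0
    then f (Finsupp.comapDomain Sum.inr e Sum.inr_injective.injOn) else 0

/-- Identify the two copies of the variables (multiplication map). -/
noncomputable def collapseW (g : MvPowerSeries (YZ N ⊕ YZ N) ℂ) : OSeries N :=
  fun e => ∑ p ∈ Finset.HasAntidiagonal.antidiagonal e,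
    g (Finsupp.mapDomain Sum.inl p.1 + Finsupp.mapDomain Sum.inr p.2)

/-- Left star action `a ∗ f` of a polynomial `a(y) ∈ A_n` on a power series in
`(y,z)`; the exponential series truncates at `totalDegree a`. -/
noncomputable def leftStarW (π : Matrix (Fin N) (Fin N) ℂ)
    (a : MvPolynomial (Fin N) ℂ) (f : OSeries N) : OSeries N :=
  ∑ m ∈ Finset.range (a.totalDegree + 1),
    ((Complex.I ^ m) / (m.factorial : ℂ)) •
      collapseW N ((stepW N π)^[m]
        (((rename (Sum.inl ∘ Sum.inl) a : MvPolynomial (YZ N ⊕ YZ N) ℂ) :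
            MvPowerSeries (YZ N ⊕ YZ N) ℂ) * embWR N f))

/-- Right star action `f ∗ a` of a polynomial `a(y) ∈ A_n` on a power series in
`(y,z)`. -/
noncomputable def rightStarW (π : Matrix (Fin N) (Fin N) ℂ)
    (f : OSeries N) (a : MvPolynomial (Fin N) ℂ) : OSeries N :=
  ∑ m ∈ Finset.range (a.totalDegree + 1),
    ((Complex.I ^ m) / (m.factorial : ℂ)) •
      collapseW N ((stepW N π)^[m]
        (embWL N f * ((rename (Sum.inr ∘ Sum.inl) a : MvPolynomial (YZ N ⊕ YZ N) ℂ) :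
            MvPowerSeries (YZ N ⊕ YZ N) ℂ)))

/-- The Moyal star product on the polynomial Weyl algebra `A_N` (used for the
products `a_k ∗ a_{k+1}` inside the Hochschild differential). -/
noncomputable def moyalP (π : Matrix (Fin N) (Fin N) ℂ)
    (a b : MvPolynomial (Fin N) ℂ) : MvPolynomial (Fin N) ℂ :=
  ∑ m ∈ Finset.range (a.totalDegree + 1),
    ((Complex.I ^ m) / (m.factorial : ℂ)) •
      (rename (Sum.elim id id))
        (((∑ j : Fin N, ∑ k : Fin N, π j k •
            ((pderiv (Sum.inl j)).toLinearMap ∘ₗ (pderiv (Sum.inr k)).toLinearMap) :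
          Module.End ℂ (MvPolynomial (Fin N ⊕ Fin N) ℂ)) ^ m)
          (rename Sum.inl a * rename Sum.inr b))

/-- The parity automorphism `a(y) ↦ a(-y)`. -/
noncomputable def parityMap :
    MvPolynomial (Fin N) ℂ →ₐ[ℂ] MvPolynomial (Fin N) ℂ :=
  aeval fun j => -(X j)

/-- The Hochschild differential `∂ : C^{p,q} → C^{p+1,q}` (with the right
action twisted by the parity automorphism). -/
noncomputable def hochDW (π : Matrix (Fin N) (Fin N) ℂ) {p q : ℕ}
    (f : BiCochain N p q) : BiCochain N (p + 1) q :=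
  fun a i =>
    leftStarW N π (a 0) (f (fun r => a r.succ) i) +
    ∑ j : Fin p, ((-1 : ℤ) ^ (j : ℕ)) •
      f (fun r : Fin p =>
        if (r : ℕ) < (j : ℕ) then a r.castSucc
        else if (r : ℕ) = (j : ℕ) then moyalP N π (a r.castSucc) (a r.succ)
        else a r.succ) i +
    ((-1 : ℤ) ^ (p + 1)) •
      rightStarW N π (f (fun r => a r.castSucc) i) (parityMap N (a (Fin.last p)))

/-- The exterior differential `d : C^{p,q} → C^{p,q+1}`,
`df = (-1)^p dz^i ∧ ∂f/∂z^i`. -/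
noncomputable def extDW {p q : ℕ} (f : BiCochain N p q) : BiCochain N p (q + 1) :=
  fun a i => ((-1 : ℤ) ^ p) • ∑ k : Fin (q + 1), ((-1 : ℤ) ^ (k : ℕ)) •
    (fun e => ((e (Sum.inr (i k)) : ℂ) + 1) *
      f a (fun r => i (k.succAbove r)) (e + Finsupp.single (Sum.inr (i k)) 1)
      : OSeries N)

/-! ### Auxiliary machinery for the proof -/

section Aux

/-- Shift-derivative on power series coefficients (`∂/∂ x_v` in the monomial basis,
up to the usual index bookkeeping). -/
noncomputable def Dv {σ : Type*} (v : σ) (g : MvPowerSeries σ ℂ) : MvPowerSeries σ ℂ :=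
  fun e => ((e v : ℂ) + 1) * g (e + Finsupp.single v 1)

lemma Dv_apply {σ : Type*} (v : σ) (g : MvPowerSeries σ ℂ) (e : σ →₀ ℕ) :
    Dv v g e = ((e v : ℂ) + 1) * g (e + Finsupp.single v 1) := rfl

lemma ps_add_apply {σ : Type*} (g h : MvPowerSeries σ ℂ) (e : σ →₀ ℕ) :
    (g + h) e = g e + h e := rfl

lemma ps_smul_apply {σ : Type*} (c : ℂ) (g : MvPowerSeries σ ℂ) (e : σ →₀ ℕ) :
    (c • g) e = c * g e := rfl

lemma ps_zero_apply {σ : Type*} (e : σ →₀ ℕ) : (0 : MvPowerSeries σ ℂ) e = 0 := rfl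

lemma Dv_add {σ : Type*} (v : σ) (g h : MvPowerSeries σ ℂ) :
    Dv v (g + h) = Dv v g + Dv v h := by
  funext e
  rw [ps_add_apply, Dv_apply, Dv_apply, Dv_apply, ps_add_apply]
  ring

lemma Dv_smul {σ : Type*} (v : σ) (c : ℂ) (g : MvPowerSeries σ ℂ) :
    Dv v (c • g) = c • Dv v g := by
  funext e
  rw [ps_smul_apply, Dv_apply, Dv_apply, ps_smul_apply]
  ring

lemma Dv_zsmul {σ : Type*} (v : σ) (z : ℤ) (g : MvPowerSeries σ ℂ) :
    Dv v (z • g) = z • Dv v g := by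
  rw [← Int.cast_smul_eq_zsmul ℂ, Dv_smul, Int.cast_smul_eq_zsmul]

lemma Dv_zero {σ : Type*} (v : σ) : Dv v (0 : MvPowerSeries σ ℂ) = 0 := by
  funext e
  rw [Dv_apply, ps_zero_apply, ps_zero_apply, mul_zero]

lemma Dv_sum {σ : Type*} {ι : Type*} (v : σ) (s : Finset ι) (F : ι → MvPowerSeries σ ℂ) :
    Dv v (∑ x ∈ s, F x) = ∑ x ∈ s, Dv v (F x) := by
  classical
  induction s using Finset.induction with
  | empty => simpa using Dv_zero v
  | insert _ _ hx ih => rw [Finset.sum_insert hx, Finset.sum_insert hx, Dv_add, ih]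

lemma Dv_comm {σ : Type*} [DecidableEq σ] (u w : σ) (g : MvPowerSeries σ ℂ) :
    Dv u (Dv w g) = Dv w (Dv u g) := by
  funext e
  rw [Dv_apply, Dv_apply, Dv_apply, Dv_apply]
  rw [add_right_comm e (Finsupp.single w 1) (Finsupp.single u 1)]
  rw [Finsupp.add_apply, Finsupp.add_apply, Finsupp.single_apply, Finsupp.single_apply]
  rcases eq_or_ne u w with h | h
  · subst h; simp
  · rw [if_neg h, if_neg (Ne.symm h)]; push_cast; ring

lemma antidiag_claim {σ : Type*} [DecidableEq σ] (v : σ) (e : σ →₀ ℕ)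
    (G : (σ →₀ ℕ) → (σ →₀ ℕ) → ℂ) :
    (∑ p ∈ Finset.HasAntidiagonal.antidiagonal (e + Finsupp.single v 1), G p.1 p.2 * (p.1 v : ℂ))
    = ∑ p ∈ Finset.HasAntidiagonal.antidiagonal e, G (p.1 + Finsupp.single v 1) p.2 * ((p.1 v : ℂ) + 1) := by
  classical
  rw [← Finset.sum_filter_of_ne
      (p := fun p : (σ →₀ ℕ) × (σ →₀ ℕ) => p.1 v ≠ 0)
      (fun x _ hfx h0 => hfx (by rw [h0]; simp))]
  refine Finset.sum_nbij' (i := fun p => (p.1 - Finsupp.single v 1, p.2))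
      (j := fun p => (p.1 + Finsupp.single v 1, p.2)) ?_ ?_ ?_ ?_ ?_
  · rintro ⟨a, b⟩ hab
    rw [Finset.mem_filter, Finset.HasAntidiagonal.mem_antidiagonal] at hab
    obtain ⟨hsum, hne⟩ := hab
    have hle : Finsupp.single v 1 ≤ a := by
      rw [Finsupp.single_le_iff]
      exact Nat.one_le_iff_ne_zero.mpr hne
    rw [Finset.HasAntidiagonal.mem_antidiagonal]
    have h2 : a - Finsupp.single v 1 + b + Finsupp.single v 1 = e + Finsupp.single v 1 := by
      rw [add_right_comm, tsub_add_cancel_of_le hle]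
      exact hsum
    exact add_right_cancel h2
  · rintro ⟨a, b⟩ hab
    rw [Finset.HasAntidiagonal.mem_antidiagonal] at hab
    rw [Finset.mem_filter, Finset.HasAntidiagonal.mem_antidiagonal]
    refine ⟨by rw [add_right_comm, hab], ?_⟩
    simp [Finsupp.add_apply, Finsupp.single_apply]
  · rintro ⟨a, b⟩ hab
    rw [Finset.mem_filter, Finset.HasAntidiagonal.mem_antidiagonal] at hab
    have hle : Finsupp.single v 1 ≤ a := by
      rw [Finsupp.single_le_iff]
      exact Nat.one_le_iff_ne_zero.mpr hab.2
    show (a - Finsupp.single v 1 + Finsupp.single v 1, b) = (a, b)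
    rw [tsub_add_cancel_of_le hle]
  · rintro ⟨a, b⟩ _
    show (a + Finsupp.single v 1 - Finsupp.single v 1, b) = (a, b)
    rw [add_tsub_cancel_right]
  · rintro ⟨a, b⟩ hab
    rw [Finset.mem_filter, Finset.HasAntidiagonal.mem_antidiagonal] at hab
    have h1 : 1 ≤ a v := Nat.one_le_iff_ne_zero.mpr hab.2
    have hle : Finsupp.single v 1 ≤ a := by rw [Finsupp.single_le_iff]; exact h1
    show G a b * _ = G (a - Finsupp.single v 1 + Finsupp.single v 1) b * _
    rw [tsub_add_cancel_of_le hle]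
    congr 1
    rw [Finsupp.tsub_apply, Finsupp.single_apply, if_pos rfl, Nat.cast_sub h1]
    push_cast
    ring

lemma antidiag_swap_sum {σ : Type*} [DecidableEq σ] (m : σ →₀ ℕ)
    (H : (σ →₀ ℕ) → (σ →₀ ℕ) → ℂ) :
    (∑ p ∈ Finset.HasAntidiagonal.antidiagonal m, H p.1 p.2) = ∑ p ∈ Finset.HasAntidiagonal.antidiagonal m, H p.2 p.1 := by
  conv_lhs => rw [← Finset.HasAntidiagonal.map_swap_antidiagonal, Finset.sum_map]
  rfl

lemma antidiag_claim' {σ : Type*} [DecidableEq σ] (v : σ) (e : σ →₀ ℕ)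
    (G : (σ →₀ ℕ) → (σ →₀ ℕ) → ℂ) :
    (∑ p ∈ Finset.HasAntidiagonal.antidiagonal (e + Finsupp.single v 1), G p.1 p.2 * (p.2 v : ℂ))
    = ∑ p ∈ Finset.HasAntidiagonal.antidiagonal e, G p.1 (p.2 + Finsupp.single v 1) * ((p.2 v : ℂ) + 1) := by
  rw [antidiag_swap_sum (e + Finsupp.single v 1) (fun a b => G a b * (b v : ℂ)),
    antidiag_claim v e (fun a b => G b a),
    antidiag_swap_sum e (fun a b => G b (a + Finsupp.single v 1) * ((a v : ℂ) + 1))]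

lemma antidiag_single_split {σ : Type*} [DecidableEq σ] (v : σ) (e : σ →₀ ℕ)
    (F : (σ →₀ ℕ) → (σ →₀ ℕ) → ℂ) :
    ((e v : ℂ) + 1) * ∑ p ∈ Finset.HasAntidiagonal.antidiagonal (e + Finsupp.single v 1), F p.1 p.2
    = ∑ p ∈ Finset.HasAntidiagonal.antidiagonal e,
        (F (p.1 + Finsupp.single v 1) p.2 * ((p.1 v : ℂ) + 1)
         + F p.1 (p.2 + Finsupp.single v 1) * ((p.2 v : ℂ) + 1)) := by
  rw [Finset.mul_sum, Finset.sum_add_distrib, ← antidiag_claim v e F, ← antidiag_claim' v e F,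
    ← Finset.sum_add_distrib]
  refine Finset.sum_congr rfl ?_
  rintro ⟨a, b⟩ hab
  rw [Finset.HasAntidiagonal.mem_antidiagonal] at hab
  have h2 : a v + b v = e v + 1 := by
    have := DFunLike.congr_fun hab v
    simpa [Finsupp.add_apply, Finsupp.single_apply] using this
  have h3 : ((e v : ℂ) + 1) = (a v : ℂ) + (b v : ℂ) := by
    have : ((a v + b v : ℕ) : ℂ) = ((e v + 1 : ℕ) : ℂ) := by rw [h2]
    push_cast at this
    linear_combination -this
  show ((e v : ℂ) + 1) * F a b = F a b * (a v : ℂ) + F a b * (b v : ℂ)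
  rw [h3]; ring

lemma mul_apply' {σ : Type*} [DecidableEq σ] (g h : MvPowerSeries σ ℂ) (e : σ →₀ ℕ) :
    (g * h) e = ∑ p ∈ Finset.HasAntidiagonal.antidiagonal e, g p.1 * h p.2 := by
  rw [show (g * h) e = MvPowerSeries.coeff e (g * h) from rfl, MvPowerSeries.coeff_mul]
  rfl

/-- Leibniz rule for `Dv`. -/
lemma Dv_mul {σ : Type*} [DecidableEq σ] (v : σ) (g h : MvPowerSeries σ ℂ) :
    Dv v (g * h) = Dv v g * h + g * Dv v h := by
  funext e
  show ((e v : ℂ) + 1) * (g * h) (e + Finsupp.single v 1) = (Dv v g * h) e + (g * Dv v h) e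
  rw [mul_apply', mul_apply', mul_apply',
    antidiag_single_split v e (fun a b => g a * h b), ← Finset.sum_add_distrib]
  refine Finset.sum_congr rfl ?_
  rintro ⟨a, b⟩ _
  show g (a + _) * h b * _ + g a * h (b + _) * _
      = Dv v g a * h b + g a * Dv v h b
  show _ = ((a v : ℂ) + 1) * g (a + Finsupp.single v 1) * h b
      + g a * (((b v : ℂ) + 1) * h (b + Finsupp.single v 1))
  ring

/-- `Dv` at a variable not in the range of a renaming kills polynomial coefficients. -/
lemma Dv_coe_rename {σ τ : Type*} (ρ : σ → τ) (a : MvPolynomial σ ℂ) (w : τ)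
    (hw : w ∉ Set.range ρ) :
    Dv w (((rename ρ a : MvPolynomial τ ℂ) : MvPowerSeries τ ℂ)) = 0 := by
  funext e
  rw [Dv_apply, ps_zero_apply]
  have hz : ((rename ρ a : MvPolynomial τ ℂ) : MvPowerSeries τ ℂ)
      (e + Finsupp.single w 1) = 0 := by
    show MvPolynomial.coeff (e + Finsupp.single w 1) (rename ρ a) = 0
    by_contra h
    obtain ⟨u, hu, -⟩ := MvPolynomial.coeff_rename_ne_zero ρ a _ h
    have h1 : Finsupp.mapDomain ρ u w = 0 := Finsupp.mapDomain_notin_range u w hw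
    have h2 := DFunLike.congr_fun hu w
    rw [h1, Finsupp.add_apply, Finsupp.single_eq_same] at h2
    omega
  rw [hz, mul_zero]

lemma pdW_eq_Dv (v : YZ N ⊕ YZ N) : pdW N v = Dv v := rfl

lemma stepW_apply (π : Matrix (Fin N) (Fin N) ℂ) (g : MvPowerSeries (YZ N ⊕ YZ N) ℂ)
    (e : YZ N ⊕ YZ N →₀ ℕ) :
    stepW N π g e = ∑ j : Fin N, ∑ k : Fin N, π j k *
      (pdW N (Sum.inl (Sum.inl j)) (pdW N (Sum.inr (Sum.inl k)) g) e +
       pdW N (Sum.inl (Sum.inl j)) (pdW N (Sum.inr (Sum.inr k)) g) e) := rfl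

lemma stepW_add (π : Matrix (Fin N) (Fin N) ℂ) (g h : MvPowerSeries (YZ N ⊕ YZ N) ℂ) :
    stepW N π (g + h) = stepW N π g + stepW N π h := by
  funext e
  rw [ps_add_apply, stepW_apply, stepW_apply, stepW_apply, ← Finset.sum_add_distrib]
  refine Finset.sum_congr rfl fun j _ => ?_
  rw [← Finset.sum_add_distrib]
  refine Finset.sum_congr rfl fun k _ => ?_
  simp only [pdW_eq_Dv, Dv_add, ps_add_apply]
  ring

lemma stepW_smul (π : Matrix (Fin N) (Fin N) ℂ) (c : ℂ) (g : MvPowerSeries (YZ N ⊕ YZ N) ℂ) :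
    stepW N π (c • g) = c • stepW N π g := by
  funext e
  rw [ps_smul_apply, stepW_apply, stepW_apply, Finset.mul_sum]
  refine Finset.sum_congr rfl fun j _ => ?_
  rw [Finset.mul_sum]
  refine Finset.sum_congr rfl fun k _ => ?_
  simp only [pdW_eq_Dv, Dv_smul, ps_smul_apply]
  ring

lemma stepW_zero (π : Matrix (Fin N) (Fin N) ℂ) :
    stepW N π (0 : MvPowerSeries (YZ N ⊕ YZ N) ℂ) = 0 := by
  funext e
  rw [ps_zero_apply, stepW_apply]
  simp only [pdW_eq_Dv, Dv_zero, ps_zero_apply, add_zero, mul_zero]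
  simp

lemma stepW_Dv (π : Matrix (Fin N) (Fin N) ℂ) (u : YZ N ⊕ YZ N)
    (g : MvPowerSeries (YZ N ⊕ YZ N) ℂ) :
    stepW N π (Dv u g) = Dv u (stepW N π g) := by
  have h1 : ∀ (u1 u2 : YZ N ⊕ YZ N),
      pdW N u1 (pdW N u2 (Dv u g)) = Dv u (pdW N u1 (pdW N u2 g)) := by
    intro u1 u2
    rw [pdW_eq_Dv, pdW_eq_Dv, Dv_comm u2 u, Dv_comm u1 u]
  funext e
  rw [Dv_apply, stepW_apply, stepW_apply, Finset.mul_sum]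
  refine Finset.sum_congr rfl fun j _ => ?_
  rw [Finset.mul_sum]
  refine Finset.sum_congr rfl fun k _ => ?_
  rw [h1, h1, Dv_apply, Dv_apply]
  ring

lemma stepW_iter_add (π : Matrix (Fin N) (Fin N) ℂ) (m : ℕ)
    (g h : MvPowerSeries (YZ N ⊕ YZ N) ℂ) :
    (stepW N π)^[m] (g + h) = (stepW N π)^[m] g + (stepW N π)^[m] h := by
  induction m generalizing g h with
  | zero => rfl
  | succ m ih =>
    rw [Function.iterate_succ_apply, Function.iterate_succ_apply,
      Function.iterate_succ_apply, stepW_add, ih]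

lemma stepW_iter_smul (π : Matrix (Fin N) (Fin N) ℂ) (m : ℕ) (c : ℂ)
    (g : MvPowerSeries (YZ N ⊕ YZ N) ℂ) :
    (stepW N π)^[m] (c • g) = c • (stepW N π)^[m] g := by
  induction m generalizing g with
  | zero => rfl
  | succ m ih =>
    rw [Function.iterate_succ_apply, Function.iterate_succ_apply, stepW_smul, ih]

lemma stepW_iter_zero (π : Matrix (Fin N) (Fin N) ℂ) (m : ℕ) :
    (stepW N π)^[m] (0 : MvPowerSeries (YZ N ⊕ YZ N) ℂ) = 0 := by
  induction m with
  | zero => rfl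
  | succ m ih => rw [Function.iterate_succ_apply, stepW_zero, ih]

lemma stepW_iter_Dv (π : Matrix (Fin N) (Fin N) ℂ) (m : ℕ) (u : YZ N ⊕ YZ N)
    (g : MvPowerSeries (YZ N ⊕ YZ N) ℂ) :
    (stepW N π)^[m] (Dv u g) = Dv u ((stepW N π)^[m] g) := by
  induction m generalizing g with
  | zero => rfl
  | succ m ih =>
    rw [Function.iterate_succ_apply, stepW_Dv, ih, Function.iterate_succ_apply]

lemma collapseW_apply (g : MvPowerSeries (YZ N ⊕ YZ N) ℂ) (e : YZ N →₀ ℕ) :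
    collapseW N g e = ∑ p ∈ Finset.HasAntidiagonal.antidiagonal e,
      g (Finsupp.mapDomain Sum.inl p.1 + Finsupp.mapDomain Sum.inr p.2) := rfl

lemma collapseW_add (g h : MvPowerSeries (YZ N ⊕ YZ N) ℂ) :
    collapseW N (g + h) = collapseW N g + collapseW N h := by
  funext e
  rw [ps_add_apply, collapseW_apply, collapseW_apply, collapseW_apply,
    ← Finset.sum_add_distrib]
  exact Finset.sum_congr rfl fun p _ => rfl

lemma collapseW_smul (c : ℂ) (g : MvPowerSeries (YZ N ⊕ YZ N) ℂ) :
    collapseW N (c • g) = c • collapseW N g := by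
  funext e
  rw [ps_smul_apply, collapseW_apply, collapseW_apply, Finset.mul_sum]
  exact Finset.sum_congr rfl fun p _ => rfl

lemma collapseW_zero : collapseW N (0 : MvPowerSeries (YZ N ⊕ YZ N) ℂ) = 0 := by
  funext e
  rw [ps_zero_apply, collapseW_apply]
  simp [ps_zero_apply]

lemma Dv_collapseW (w : YZ N) (g : MvPowerSeries (YZ N ⊕ YZ N) ℂ) :
    Dv w (collapseW N g)
      = collapseW N (Dv (Sum.inl w) g) + collapseW N (Dv (Sum.inr w) g) := by
  funext e
  rw [ps_add_apply, Dv_apply, collapseW_apply, collapseW_apply, collapseW_apply,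
    antidiag_single_split w e
      (fun a b => g (Finsupp.mapDomain (Sum.inl : YZ N → YZ N ⊕ YZ N) a
        + Finsupp.mapDomain (Sum.inr : YZ N → YZ N ⊕ YZ N) b)),
    ← Finset.sum_add_distrib]
  refine Finset.sum_congr rfl ?_
  rintro ⟨a, b⟩ _
  have hL : (Finsupp.mapDomain (Sum.inl : YZ N → YZ N ⊕ YZ N) a
      + Finsupp.mapDomain (Sum.inr : YZ N → YZ N ⊕ YZ N) b) (Sum.inl w) = a w := by
    rw [Finsupp.add_apply, Finsupp.mapDomain_apply Sum.inl_injective,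
      Finsupp.mapDomain_notin_range _ _ (by simp), add_zero]
  have hR : (Finsupp.mapDomain (Sum.inl : YZ N → YZ N ⊕ YZ N) a
      + Finsupp.mapDomain (Sum.inr : YZ N → YZ N ⊕ YZ N) b) (Sum.inr w) = b w := by
    rw [Finsupp.add_apply, Finsupp.mapDomain_apply Sum.inr_injective,
      Finsupp.mapDomain_notin_range _ _ (by simp), zero_add]
  rw [Dv_apply, Dv_apply, hL, hR, Finsupp.mapDomain_add, Finsupp.mapDomain_add,
    Finsupp.mapDomain_single, Finsupp.mapDomain_single,
    add_right_comm (Finsupp.mapDomain (Sum.inl : YZ N → YZ N ⊕ YZ N) a) _ _]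
  simp only [add_assoc]
  ring

lemma embWR_apply (f : OSeries N) (e : YZ N ⊕ YZ N →₀ ℕ) :
    embWR N f e = if ∀ v, e (Sum.inl v) = 0
      then f (Finsupp.comapDomain Sum.inr e Sum.inr_injective.injOn) else 0 := rfl

lemma embWL_apply (f : OSeries N) (e : YZ N ⊕ YZ N →₀ ℕ) :
    embWL N f e = if ∀ v, e (Sum.inr v) = 0
      then f (Finsupp.comapDomain Sum.inl e Sum.inl_injective.injOn) else 0 := rfl

lemma embWR_add (f g : OSeries N) : embWR N (f + g) = embWR N f + embWR N g := by
  classical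
  funext e
  rw [ps_add_apply, embWR_apply, embWR_apply, embWR_apply]
  by_cases hc : ∀ v, e (Sum.inl v) = 0
  · rw [if_pos hc, if_pos hc, if_pos hc, ps_add_apply]
  · rw [if_neg hc, if_neg hc, if_neg hc, add_zero]

lemma embWR_smul (c : ℂ) (f : OSeries N) : embWR N (c • f) = c • embWR N f := by
  classical
  funext e
  rw [ps_smul_apply, embWR_apply, embWR_apply]
  by_cases hc : ∀ v, e (Sum.inl v) = 0
  · rw [if_pos hc, if_pos hc, ps_smul_apply]
  · rw [if_neg hc, if_neg hc, mul_zero]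

lemma embWR_zero : embWR N (0 : OSeries N) = 0 := by
  classical
  funext e
  rw [ps_zero_apply, embWR_apply]
  by_cases hc : ∀ v, e (Sum.inl v) = 0
  · rw [if_pos hc, ps_zero_apply]
  · rw [if_neg hc]

lemma embWL_add (f g : OSeries N) : embWL N (f + g) = embWL N f + embWL N g := by
  classical
  funext e
  rw [ps_add_apply, embWL_apply, embWL_apply, embWL_apply]
  by_cases hc : ∀ v, e (Sum.inr v) = 0
  · rw [if_pos hc, if_pos hc, if_pos hc, ps_add_apply]
  · rw [if_neg hc, if_neg hc, if_neg hc, add_zero]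

lemma embWL_smul (c : ℂ) (f : OSeries N) : embWL N (c • f) = c • embWL N f := by
  classical
  funext e
  rw [ps_smul_apply, embWL_apply, embWL_apply]
  by_cases hc : ∀ v, e (Sum.inr v) = 0
  · rw [if_pos hc, if_pos hc, ps_smul_apply]
  · rw [if_neg hc, if_neg hc, mul_zero]

lemma embWL_zero : embWL N (0 : OSeries N) = 0 := by
  classical
  funext e
  rw [ps_zero_apply, embWL_apply]
  by_cases hc : ∀ v, e (Sum.inr v) = 0
  · rw [if_pos hc, ps_zero_apply]
  · rw [if_neg hc]

lemma Dv_embWR (w : YZ N) (f : OSeries N) :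
    Dv (Sum.inr w : YZ N ⊕ YZ N) (embWR N f) = embWR N (Dv w f) := by
  classical
  funext e
  rw [Dv_apply, embWR_apply, embWR_apply]
  have hcond : (∀ v : YZ N, (e + Finsupp.single (Sum.inr w : YZ N ⊕ YZ N) 1 : YZ N ⊕ YZ N →₀ ℕ) (Sum.inl v) = 0)
      ↔ (∀ v : YZ N, e (Sum.inl v) = 0) := by
    refine forall_congr' fun v => ?_
    rw [Finsupp.add_apply, Finsupp.single_apply, if_neg (by simp), add_zero]
  by_cases hc : ∀ v, e (Sum.inl v) = 0
  · rw [if_pos (hcond.mpr hc), if_pos hc]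
    have hcomap : Finsupp.comapDomain (Sum.inr : YZ N → YZ N ⊕ YZ N)
          (e + Finsupp.single (Sum.inr w) 1) Sum.inr_injective.injOn
        = Finsupp.comapDomain (Sum.inr : YZ N → YZ N ⊕ YZ N) e Sum.inr_injective.injOn
          + Finsupp.single w 1 := by
      ext u
      rw [Finsupp.comapDomain_apply, Finsupp.add_apply, Finsupp.add_apply,
        Finsupp.comapDomain_apply]
      simp [Finsupp.single_apply, Sum.inr.injEq]
    rw [hcomap, Dv_apply, Finsupp.comapDomain_apply]
  · rw [if_neg (fun h => hc (hcond.mp h)), if_neg hc, mul_zero]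

lemma Dv_embWR_left (w : YZ N) (f : OSeries N) :
    Dv (Sum.inl w : YZ N ⊕ YZ N) (embWR N f) = 0 := by
  classical
  funext e
  rw [Dv_apply, embWR_apply, ps_zero_apply, if_neg, mul_zero]
  intro h
  have := h w
  rw [Finsupp.add_apply, Finsupp.single_apply, if_pos rfl] at this
  omega

lemma Dv_embWL (w : YZ N) (f : OSeries N) :
    Dv (Sum.inl w : YZ N ⊕ YZ N) (embWL N f) = embWL N (Dv w f) := by
  classical
  funext e
  rw [Dv_apply, embWL_apply, embWL_apply]
  have hcond : (∀ v : YZ N, (e + Finsupp.single (Sum.inl w : YZ N ⊕ YZ N) 1 : YZ N ⊕ YZ N →₀ ℕ) (Sum.inr v) = 0)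
      ↔ (∀ v : YZ N, e (Sum.inr v) = 0) := by
    refine forall_congr' fun v => ?_
    rw [Finsupp.add_apply, Finsupp.single_apply, if_neg (by simp), add_zero]
  by_cases hc : ∀ v, e (Sum.inr v) = 0
  · rw [if_pos (hcond.mpr hc), if_pos hc]
    have hcomap : Finsupp.comapDomain (Sum.inl : YZ N → YZ N ⊕ YZ N)
          (e + Finsupp.single (Sum.inl w) 1) Sum.inl_injective.injOn
        = Finsupp.comapDomain (Sum.inl : YZ N → YZ N ⊕ YZ N) e Sum.inl_injective.injOn
          + Finsupp.single w 1 := by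
      ext u
      rw [Finsupp.comapDomain_apply, Finsupp.add_apply, Finsupp.add_apply,
        Finsupp.comapDomain_apply]
      simp [Finsupp.single_apply, Sum.inl.injEq]
    rw [hcomap, Dv_apply, Finsupp.comapDomain_apply]
  · rw [if_neg (fun h => hc (hcond.mp h)), if_neg hc, mul_zero]

lemma Dv_embWL_right (w : YZ N) (f : OSeries N) :
    Dv (Sum.inr w : YZ N ⊕ YZ N) (embWL N f) = 0 := by
  classical
  funext e
  rw [Dv_apply, embWL_apply, ps_zero_apply, if_neg, mul_zero]
  intro h
  have := h w
  rw [Finsupp.add_apply, Finsupp.single_apply, if_pos rfl] at this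
  omega

lemma leftStarW_add (π : Matrix (Fin N) (Fin N) ℂ) (a : MvPolynomial (Fin N) ℂ)
    (f g : OSeries N) :
    leftStarW N π a (f + g) = leftStarW N π a f + leftStarW N π a g := by
  unfold leftStarW
  rw [← Finset.sum_add_distrib]
  refine Finset.sum_congr rfl fun m _ => ?_
  rw [embWR_add, mul_add, stepW_iter_add, collapseW_add, smul_add]

lemma leftStarW_smul (π : Matrix (Fin N) (Fin N) ℂ) (a : MvPolynomial (Fin N) ℂ)
    (c : ℂ) (f : OSeries N) :
    leftStarW N π a (c • f) = c • leftStarW N π a f := by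
  unfold leftStarW
  rw [Finset.smul_sum]
  refine Finset.sum_congr rfl fun m _ => ?_
  rw [embWR_smul, mul_smul_comm, stepW_iter_smul, collapseW_smul, smul_comm]

lemma leftStarW_zero (π : Matrix (Fin N) (Fin N) ℂ) (a : MvPolynomial (Fin N) ℂ) :
    leftStarW N π a (0 : OSeries N) = 0 := by
  unfold leftStarW
  refine Finset.sum_eq_zero fun m _ => ?_
  rw [embWR_zero, mul_zero, stepW_iter_zero, collapseW_zero, smul_zero]

lemma leftStarW_zsmul (π : Matrix (Fin N) (Fin N) ℂ) (a : MvPolynomial (Fin N) ℂ)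
    (z : ℤ) (f : OSeries N) :
    leftStarW N π a (z • f) = z • leftStarW N π a f := by
  rw [← Int.cast_smul_eq_zsmul ℂ, leftStarW_smul, Int.cast_smul_eq_zsmul]

lemma leftStarW_sum {ι : Type*} (π : Matrix (Fin N) (Fin N) ℂ) (a : MvPolynomial (Fin N) ℂ)
    (s : Finset ι) (F : ι → OSeries N) :
    leftStarW N π a (∑ x ∈ s, F x) = ∑ x ∈ s, leftStarW N π a (F x) := by
  classical
  induction s using Finset.induction with
  | empty => simpa using leftStarW_zero N π a
  | insert _ _ hx ih => rw [Finset.sum_insert hx, Finset.sum_insert hx, leftStarW_add, ih]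

lemma rightStarW_add (π : Matrix (Fin N) (Fin N) ℂ) (a : MvPolynomial (Fin N) ℂ)
    (f g : OSeries N) :
    rightStarW N π (f + g) a = rightStarW N π f a + rightStarW N π g a := by
  unfold rightStarW
  rw [← Finset.sum_add_distrib]
  refine Finset.sum_congr rfl fun m _ => ?_
  rw [embWL_add, add_mul, stepW_iter_add, collapseW_add, smul_add]

lemma rightStarW_smul (π : Matrix (Fin N) (Fin N) ℂ) (a : MvPolynomial (Fin N) ℂ)
    (c : ℂ) (f : OSeries N) :
    rightStarW N π (c • f) a = c • rightStarW N π f a := by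
  unfold rightStarW
  rw [Finset.smul_sum]
  refine Finset.sum_congr rfl fun m _ => ?_
  rw [embWL_smul, smul_mul_assoc, stepW_iter_smul, collapseW_smul, smul_comm]

lemma rightStarW_zero (π : Matrix (Fin N) (Fin N) ℂ) (a : MvPolynomial (Fin N) ℂ) :
    rightStarW N π (0 : OSeries N) a = 0 := by
  unfold rightStarW
  refine Finset.sum_eq_zero fun m _ => ?_
  rw [embWL_zero, zero_mul, stepW_iter_zero, collapseW_zero, smul_zero]

lemma rightStarW_zsmul (π : Matrix (Fin N) (Fin N) ℂ) (a : MvPolynomial (Fin N) ℂ)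
    (z : ℤ) (f : OSeries N) :
    rightStarW N π (z • f) a = z • rightStarW N π f a := by
  rw [← Int.cast_smul_eq_zsmul ℂ, rightStarW_smul, Int.cast_smul_eq_zsmul]

lemma rightStarW_sum {ι : Type*} (π : Matrix (Fin N) (Fin N) ℂ) (a : MvPolynomial (Fin N) ℂ)
    (s : Finset ι) (F : ι → OSeries N) :
    rightStarW N π (∑ x ∈ s, F x) a = ∑ x ∈ s, rightStarW N π (F x) a := by
  classical
  induction s using Finset.induction with
  | empty => simpa using rightStarW_zero N π a
  | insert _ _ hx ih => rw [Finset.sum_insert hx, Finset.sum_insert hx, rightStarW_add, ih]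

lemma leftStarW_Dv (π : Matrix (Fin N) (Fin N) ℂ) (a : MvPolynomial (Fin N) ℂ)
    (v : Fin N) (f : OSeries N) :
    Dv (Sum.inr v : YZ N) (leftStarW N π a f)
      = leftStarW N π a (Dv (Sum.inr v : YZ N) f) := by
  unfold leftStarW
  rw [Dv_sum]
  refine Finset.sum_congr rfl fun m _ => ?_
  rw [Dv_smul]
  congr 1
  rw [Dv_collapseW, ← stepW_iter_Dv, ← stepW_iter_Dv, Dv_mul, Dv_mul,
    Dv_coe_rename _ _ _ (by rintro ⟨u, hu⟩; simp at hu),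
    Dv_coe_rename _ _ _ (by rintro ⟨u, hu⟩; simp at hu),
    Dv_embWR_left, Dv_embWR]
  simp only [zero_mul, mul_zero, add_zero, zero_add, stepW_iter_zero, collapseW_zero]

lemma rightStarW_Dv (π : Matrix (Fin N) (Fin N) ℂ) (a : MvPolynomial (Fin N) ℂ)
    (v : Fin N) (f : OSeries N) :
    Dv (Sum.inr v : YZ N) (rightStarW N π f a)
      = rightStarW N π (Dv (Sum.inr v : YZ N) f) a := by
  unfold rightStarW
  rw [Dv_sum]
  refine Finset.sum_congr rfl fun m _ => ?_
  rw [Dv_smul]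
  congr 1
  rw [Dv_collapseW, ← stepW_iter_Dv, ← stepW_iter_Dv, Dv_mul, Dv_mul,
    Dv_coe_rename _ _ _ (by rintro ⟨u, hu⟩; simp at hu),
    Dv_coe_rename _ _ _ (by rintro ⟨u, hu⟩; simp at hu),
    Dv_embWL, Dv_embWL_right]
  simp only [zero_mul, mul_zero, add_zero, zero_add, stepW_iter_zero, collapseW_zero]

end Aux


/-- on the Hochschild bicomplex `C^{p,q} = C^p(A_n, Ω̂^q)`, the
exterior differential `d f = (-1)^p dz^i ∧ ∂f/∂z^i` anticommutes with the
Hochschild differential `∂`: one has `d∂ + ∂d = 0`. -/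
theorem extD_hochD_anticommute (n : ℕ)
    (π : Matrix (Fin (2 * n)) (Fin (2 * n)) ℂ)
    (hanti : π.transpose = -π) (hnondeg : IsUnit π.det)
    (p q : ℕ) (f : BiCochain (2 * n) p q) :
    extDW (2 * n) (hochDW (2 * n) π f) + hochDW (2 * n) π (extDW (2 * n) f) = 0 := by
  funext a i
  show extDW (2 * n) (hochDW (2 * n) π f) a i + hochDW (2 * n) π (extDW (2 * n) f) a i = 0
  have extDW_eq : ∀ (p' : ℕ) (g : BiCochain (2 * n) p' q)
      (b : Fin p' → MvPolynomial (Fin (2 * n)) ℂ),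
      extDW (2 * n) g b i = ((-1 : ℤ) ^ p') • ∑ k : Fin (q + 1), ((-1 : ℤ) ^ (k : ℕ)) •
        Dv (Sum.inr (i k) : YZ (2 * n)) (g b (fun r => i (k.succAbove r))) :=
    fun p' g b => rfl
  -- the three building blocks
  set A : Fin (q + 1) → OSeries (2 * n) := fun k =>
    leftStarW (2 * n) π (a 0)
      (Dv (Sum.inr (i k)) (f (fun r => a r.succ) (fun r => i (k.succAbove r)))) with hA
  set B : Fin (q + 1) → OSeries (2 * n) := fun k =>
    ∑ j : Fin p, ((-1 : ℤ) ^ (j : ℕ)) •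
      Dv (Sum.inr (i k)) (f (fun r : Fin p =>
        if (r : ℕ) < (j : ℕ) then a r.castSucc
        else if (r : ℕ) = (j : ℕ) then moyalP (2 * n) π (a r.castSucc) (a r.succ)
        else a r.succ) (fun r => i (k.succAbove r))) with hB
  set C : Fin (q + 1) → OSeries (2 * n) := fun k =>
    ((-1 : ℤ) ^ (p + 1)) •
      rightStarW (2 * n) π
        (Dv (Sum.inr (i k)) (f (fun r => a r.castSucc) (fun r => i (k.succAbove r))))
        (parityMap (2 * n) (a (Fin.last p))) with hC
  have key : ∀ k : Fin (q + 1),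
      Dv (Sum.inr (i k)) (hochDW (2 * n) π f a (fun r => i (k.succAbove r)))
        = A k + B k + C k := by
    intro k
    rw [hA, hB, hC]
    show Dv (Sum.inr (i k))
        (leftStarW (2 * n) π (a 0) (f (fun r => a r.succ) (fun r => i (k.succAbove r)))
          + (∑ j : Fin p, ((-1 : ℤ) ^ (j : ℕ)) •
              f (fun r : Fin p =>
                if (r : ℕ) < (j : ℕ) then a r.castSucc
                else if (r : ℕ) = (j : ℕ) then moyalP (2 * n) π (a r.castSucc) (a r.succ)
                else a r.succ) (fun r => i (k.succAbove r)))
          + ((-1 : ℤ) ^ (p + 1)) •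
              rightStarW (2 * n) π (f (fun r => a r.castSucc) (fun r => i (k.succAbove r)))
                (parityMap (2 * n) (a (Fin.last p)))) = _
    rw [Dv_add, Dv_add, Dv_sum, Dv_zsmul, leftStarW_Dv, rightStarW_Dv]
    simp only [Dv_zsmul]
  have h1 : extDW (2 * n) (hochDW (2 * n) π f) a i
      = ((-1 : ℤ) ^ (p + 1)) • ∑ k : Fin (q + 1), ((-1 : ℤ) ^ (k : ℕ)) •
          Dv (Sum.inr (i k)) (hochDW (2 * n) π f a (fun r => i (k.succAbove r))) := rfl
  have h2 : hochDW (2 * n) π (extDW (2 * n) f) a i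
      = ((-1 : ℤ) ^ p) • ∑ k : Fin (q + 1), ((-1 : ℤ) ^ (k : ℕ)) •
          Dv (Sum.inr (i k)) (hochDW (2 * n) π f a (fun r => i (k.succAbove r))) := by
    have hRHS : (∑ k : Fin (q + 1), ((-1 : ℤ) ^ (k : ℕ)) •
          Dv (Sum.inr (i k)) (hochDW (2 * n) π f a (fun r => i (k.succAbove r))))
        = ∑ k : Fin (q + 1), ((-1 : ℤ) ^ (k : ℕ)) • (A k + B k + C k) :=
      Finset.sum_congr rfl fun k _ => by rw [key k]
    rw [hRHS]
    have t1 : leftStarW (2 * n) π (a 0) (extDW (2 * n) f (fun r => a r.succ) i)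
        = ((-1 : ℤ) ^ p) • ∑ k : Fin (q + 1), ((-1 : ℤ) ^ (k : ℕ)) • A k := by
      rw [extDW_eq, leftStarW_zsmul, leftStarW_sum]
      congr 1
      exact Finset.sum_congr rfl fun k _ => leftStarW_zsmul _ _ _ _ _
    have t2 : (∑ j : Fin p, ((-1 : ℤ) ^ (j : ℕ)) •
          extDW (2 * n) f (fun r : Fin p =>
            if (r : ℕ) < (j : ℕ) then a r.castSucc
            else if (r : ℕ) = (j : ℕ) then moyalP (2 * n) π (a r.castSucc) (a r.succ)
            else a r.succ) i)
        = ((-1 : ℤ) ^ p) • ∑ k : Fin (q + 1), ((-1 : ℤ) ^ (k : ℕ)) • B k := by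
      have step : ∀ j : Fin p, ((-1 : ℤ) ^ (j : ℕ)) •
            extDW (2 * n) f (fun r : Fin p =>
              if (r : ℕ) < (j : ℕ) then a r.castSucc
              else if (r : ℕ) = (j : ℕ) then moyalP (2 * n) π (a r.castSucc) (a r.succ)
              else a r.succ) i
          = ((-1 : ℤ) ^ p) • ∑ k : Fin (q + 1), ((-1 : ℤ) ^ (k : ℕ)) •
              (((-1 : ℤ) ^ (j : ℕ)) • Dv (Sum.inr (i k)) (f (fun r : Fin p =>
                if (r : ℕ) < (j : ℕ) then a r.castSucc
                else if (r : ℕ) = (j : ℕ) then moyalP (2 * n) π (a r.castSucc) (a r.succ)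
                else a r.succ) (fun r => i (k.succAbove r)))) := by
        intro j
        rw [extDW_eq, smul_comm ((-1 : ℤ) ^ (j : ℕ)) ((-1 : ℤ) ^ p), Finset.smul_sum]
        congr 1
        exact Finset.sum_congr rfl fun k _ => smul_comm _ _ _
      rw [Finset.sum_congr rfl fun j (_ : j ∈ Finset.univ) => step j, ← Finset.smul_sum]
      congr 1
      rw [Finset.sum_comm]
      refine Finset.sum_congr rfl fun k _ => ?_
      rw [hB, Finset.smul_sum]
    have t3 : ((-1 : ℤ) ^ (p + 1)) •
          rightStarW (2 * n) π (extDW (2 * n) f (fun r => a r.castSucc) i)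
            (parityMap (2 * n) (a (Fin.last p)))
        = ((-1 : ℤ) ^ p) • ∑ k : Fin (q + 1), ((-1 : ℤ) ^ (k : ℕ)) • C k := by
      rw [extDW_eq, rightStarW_zsmul, rightStarW_sum]
      rw [Finset.sum_congr rfl fun (k : Fin (q + 1)) (_ : k ∈ Finset.univ) =>
        rightStarW_zsmul (2 * n) π (parityMap (2 * n) (a (Fin.last p))) ((-1 : ℤ) ^ (k : ℕ))
          (Dv (Sum.inr (i k)) (f (fun r => a r.castSucc) (fun r => i (k.succAbove r))))]
      rw [smul_comm ((-1 : ℤ) ^ (p + 1)) ((-1 : ℤ) ^ p), Finset.smul_sum]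
      congr 1
      exact Finset.sum_congr rfl fun k _ => smul_comm _ _ _
    show leftStarW (2 * n) π (a 0) (extDW (2 * n) f (fun r => a r.succ) i)
        + (∑ j : Fin p, ((-1 : ℤ) ^ (j : ℕ)) •
            extDW (2 * n) f (fun r : Fin p =>
              if (r : ℕ) < (j : ℕ) then a r.castSucc
              else if (r : ℕ) = (j : ℕ) then moyalP (2 * n) π (a r.castSucc) (a r.succ)
              else a r.succ) i)
        + ((-1 : ℤ) ^ (p + 1)) •
            rightStarW (2 * n) π (extDW (2 * n) f (fun r => a r.castSucc) i)
              (parityMap (2 * n) (a (Fin.last p))) = _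
    rw [t1, t2, t3, ← smul_add, ← smul_add]
    congr 1
    rw [← Finset.sum_add_distrib, ← Finset.sum_add_distrib]
    exact Finset.sum_congr rfl fun k _ => by rw [smul_add, smul_add]
  rw [h1, h2, ← add_smul]
  have hz : ((-1 : ℤ) ^ (p + 1)) + ((-1 : ℤ) ^ p) = 0 := by
    rw [pow_succ]; ring
  rw [hz, zero_smul]
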